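/- Let κ = r, or assume k^{ch} ≥ 0 and let κ ∈ {k^{ch}, r}. Then: (1) for every l ∈ {0,…,κ−1}, z_l(z) tends to the nonzero value σ_l·exp(μ_{κ−l−1,κ}) as z → μ_κ with z ∈ H; (2) for every q = (q₀,…,q_r) ∈ ℚ^{r+1} with (q_κ,…,q_r) ≠ 0: if q is κ-positive then |(σ𝒵)^{⊗q}(z)| → 0 as z → μ_κ with z ∈ H, and if q is κ-negative then |(σ𝒵)^{⊗q}(z)| → +∞ as z → μ_κ with z ∈ H. (Proposition 5.34 of the paper for a fixed value of the parameter t, with the definable curve replaced by the limit z → μ_κ within H.) -/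

import Mathlib

/-- The iterated functions `g_l` of a logarithmic scale (for a fixed parameter `t`):
`g_0 x = x - Θ 0`, `g_{l+1} x = log (σ l * g_l x) - Θ (l+1)`. -/
noncomputable def gIter (Θ σ : ℕ → ℝ) : ℕ → ℝ → ℝ
  | 0, x => x - Θ 0
  | l + 1, x => Real.log (σ l * gIter Θ σ l x) - Θ (l + 1)

/-- The domains `D_l`: `D_0 = ℝ`, `D_{l+1} = {x ∈ D_l : σ l * g_l x > 0}`.
Note that the final domain `D` of the paper equals `DIter Θ σ (r+1)`. -/
def DIter (Θ σ : ℕ → ℝ) : ℕ → Set ℝ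
  | 0 => Set.univ
  | l + 1 => {x | x ∈ DIter Θ σ l ∧ 0 < σ l * gIter Θ σ l x}

/-- The auxiliary numbers `μ_{j,l}`: `μ_{0,l} = Θ l`,
`μ_{j+1,l} = Θ (l-(j+1)) + σ (l-(j+1)) * exp (μ_{j,l})`. -/
noncomputable def muAux (Θ σ : ℕ → ℝ) (l : ℕ) : ℕ → ℝ
  | 0 => Θ l
  | j + 1 => Θ (l - (j + 1)) + σ (l - (j + 1)) * Real.exp (muAux Θ σ l j)

/-- The numbers `μ_l := μ_{l,l}`. -/
noncomputable def mu (Θ σ : ℕ → ℝ) (l : ℕ) : ℝ := muAux Θ σ l l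

/-- The complex extensions `z_l` of the functions of a logarithmic scale:
`z_0 z = z - Θ 0`, `z_{l+1} z = log (σ l * z_l z) - Θ (l+1)`, with the principal
branch of the complex logarithm. -/
noncomputable def zIter (Θ σ : ℕ → ℝ) : ℕ → ℂ → ℂ
  | 0, z => z - (Θ 0 : ℂ)
  | l + 1, z => Complex.log ((σ l : ℂ) * zIter Θ σ l z) - (Θ (l + 1) : ℂ)

/-- The complex domains `H_l`: `H_0 = ℂ`,
`H_{l+1} = {z ∈ H_l : σ l * z_l z ∈ ℂ⁻}`, where `ℂ⁻ = ℂ ∖ ℝ_{≤0}` is the slit plane.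
Note that the final domain `H` of the paper equals `HIter Θ σ (r+1)`. -/
def HIter (Θ σ : ℕ → ℝ) : ℕ → Set ℂ
  | 0 => Set.univ
  | l + 1 => {z | z ∈ HIter Θ σ l ∧ (σ l : ℂ) * zIter Θ σ l z ∈ Complex.slitPlane}

/-- The principal power `w^a := exp (a * log w)` (principal branch of the logarithm). -/
noncomputable def pcpow (w a : ℂ) : ℂ := Complex.exp (a * Complex.log w)

/-- The function `(σ𝒵)^{⊗q} (z) := ∏_{j=0}^{r} (σ j * z_j z)^{q j}` with principal powers. -/
noncomputable def sigmaZpow (Θ σ : ℕ → ℝ) (r : ℕ) (q : ℕ → ℚ) (z : ℂ) : ℂ :=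
  ∏ j ∈ Finset.range (r + 1), pcpow ((σ j : ℂ) * zIter Θ σ j z) ((q j : ℂ))

open Classical in
/-- The change index `k^{ch}`: `max {l ∈ {0,…,r} : σ l = -1} - 1` if such `l` exists,
and `-2` otherwise. -/
noncomputable def kch (σ : ℕ → ℝ) (r : ℕ) : ℤ :=
  if ∃ l, l ≤ r ∧ σ l = -1 then ((sSup {l : ℕ | l ≤ r ∧ σ l = -1} : ℕ) : ℤ) - 1 else -2

/-- The index `l_min(q) = min {j : κ < j ≤ r, q j ≠ 0}`. -/
noncomputable def lmin (q : ℕ → ℚ) (κ r : ℕ) : ℕ := sInf {j : ℕ | κ < j ∧ j ≤ r ∧ q j ≠ 0}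

/-- `q` is `κ`-positive: `q κ > 0`, or `q κ = 0` and `q (l_min) < 0`.  (Under the
hypothesis `(q κ, …, q r) ≠ 0` this agrees with the paper's definition both for
`κ = r` and for `κ = k^{ch} ≥ 0`.) -/
def kappaPos (q : ℕ → ℚ) (κ r : ℕ) : Prop :=
  0 < q κ ∨ (q κ = 0 ∧ q (lmin q κ r) < 0)

/-- `q` is `κ`-negative: `q κ < 0`, or `q κ = 0` and `q (l_min) > 0`. -/
def kappaNeg (q : ℕ → ℚ) (κ r : ℕ) : Prop :=
  q κ < 0 ∨ (q κ = 0 ∧ 0 < q (lmin q κ r))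


open Filter Topology

private lemma aux_log_add_div (C : ℝ) :
    Tendsto (fun x : ℝ => Real.log (x + C) / x) atTop (𝓝 0) := by
  have h1 : Tendsto (fun x : ℝ => Real.log (x + C) / (x + C)) atTop (𝓝 0) :=
    (Real.isLittleO_log_id_atTop.tendsto_div_nhds_zero).comp
      (tendsto_atTop_add_const_right _ C tendsto_id)
  have h2 : Tendsto (fun x : ℝ => (x + C) / x) atTop (𝓝 1) := by
    have h : Tendsto (fun x : ℝ => 1 + C / x) atTop (𝓝 (1 + 0)) :=
      tendsto_const_nhds.add (tendsto_const_nhds.div_atTop tendsto_id)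
    rw [add_zero] at h
    refine h.congr' ?_
    filter_upwards [eventually_ne_atTop 0] with x hx
    field_simp
  have h3 := h1.mul h2
  rw [zero_mul] at h3
  refine h3.congr' ?_
  filter_upwards [eventually_gt_atTop (max 0 (-C))] with x hx
  have hx0 : x ≠ 0 := by
    have := lt_of_le_of_lt (le_max_left 0 (-C)) hx; linarith
  have hxC : x + C ≠ 0 := by
    have := lt_of_le_of_lt (le_max_right 0 (-C)) hx; intro h; apply absurd h; intro h'; linarith
  field_simp

private lemma core_chain {α : Type*} {F : Filter α} {T g : α → ℝ} {C : ℝ}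
    (hT : Tendsto T F atTop)
    (h1 : ∀ᶠ z in F, T z - C ≤ g z) (h2 : ∀ᶠ z in F, g z ≤ T z + C) :
    Tendsto g F atTop ∧ Tendsto (fun z => Real.log (g z) / T z) F (𝓝 0) := by
  have hTC : Tendsto (fun z => T z - C) F atTop := tendsto_atTop_add_const_right _ (-C) hT
  have hg : Tendsto g F atTop := tendsto_atTop_mono' F h1 hTC
  constructor
  · exact hg
  · have hub : Tendsto (fun z => Real.log (T z + C) / T z) F (𝓝 0) :=
      (aux_log_add_div C).comp hT
    apply squeeze_zero' ?_ ?_ hub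
    · filter_upwards [hg.eventually_ge_atTop 1, hT.eventually_ge_atTop 1] with z hz hz'
      exact div_nonneg (Real.log_nonneg hz) (by linarith)
    · filter_upwards [hg.eventually_ge_atTop 1, hT.eventually_ge_atTop 1, h2] with z hz hz' h2z
      have hlog : Real.log (g z) ≤ Real.log (T z + C) :=
        Real.log_le_log (by linarith) h2z
      apply div_le_div_of_nonneg_right hlog (by linarith)

private lemma mem_slitPlane_of_mem_HIter (Θ σ : ℕ → ℝ) :
    ∀ n, ∀ z ∈ HIter Θ σ n, ∀ j < n, (σ j : ℂ) * zIter Θ σ j z ∈ Complex.slitPlane := by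
  intro n
  induction n with
  | zero => intro z _ j hj; omega
  | succ n ih =>
    intro z hz j hj
    obtain ⟨hz1, hz2⟩ : z ∈ HIter Θ σ n ∧ (σ n : ℂ) * zIter Θ σ n z ∈ Complex.slitPlane := hz
    rcases Nat.lt_succ_iff_lt_or_eq.mp hj with h | h
    · exact ih z hz1 j h
    · rw [h]; exact hz2

private lemma abs_pcpow_ratCast (w : ℂ) (q : ℚ) :
    ‖pcpow w (q : ℂ)‖ = Real.exp ((q : ℝ) * Real.log ‖w‖) := by
  rw [pcpow, Complex.norm_exp]
  congr 1
  simp [Complex.mul_re, Complex.log_re]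

private lemma abs_sigmaZpow (Θ σ : ℕ → ℝ) (r : ℕ) (q : ℕ → ℚ) (z : ℂ) :
    ‖sigmaZpow Θ σ r q z‖ =
      Real.exp (∑ j ∈ Finset.range (r + 1),
        (q j : ℝ) * Real.log ‖(σ j : ℂ) * zIter Θ σ j z‖) := by
  rw [sigmaZpow, norm_prod, Real.exp_sum]
  exact Finset.prod_congr rfl fun j _ => abs_pcpow_ratCast _ _

private lemma abs_zIter_succ_bounds (Θ σ : ℕ → ℝ) (j : ℕ) (z : ℂ) :
    |Real.log ‖(σ j : ℂ) * zIter Θ σ j z‖| - |Θ (j + 1)| ≤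
        ‖zIter Θ σ (j + 1) z‖ ∧
      ‖zIter Θ σ (j + 1) z‖ ≤
        |Real.log ‖(σ j : ℂ) * zIter Θ σ j z‖| + (Real.pi + |Θ (j + 1)|) := by
  set w : ℂ := (σ j : ℂ) * zIter Θ σ j z with hw
  have hz : zIter Θ σ (j + 1) z = Complex.log w - (Θ (j + 1) : ℂ) := rfl
  have hre : |Real.log ‖w‖| = |(Complex.log w).re| := by rw [Complex.log_re]
  have him : |(Complex.log w).im| ≤ Real.pi := by
    rw [Complex.log_im]; exact Complex.abs_arg_le_pi w
  constructor
  · rw [hz, hre]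
    calc |(Complex.log w).re| - |Θ (j+1)| ≤ ‖Complex.log w‖ - |Θ (j+1)| := by
          have := Complex.abs_re_le_norm (Complex.log w); linarith
      _ ≤ ‖Complex.log w - (Θ (j+1) : ℂ)‖ := by
          have h : ‖Complex.log w‖ - ‖((Θ (j+1) : ℂ))‖ ≤
              ‖Complex.log w - (Θ (j+1) : ℂ)‖ := by
            simpa using
              norm_sub_norm_le (Complex.log w) ((Θ (j+1) : ℂ))
          rw [Complex.norm_real, Real.norm_eq_abs] at h
          exact h
  · rw [hz, hre]
    calc ‖Complex.log w - (Θ (j+1) : ℂ)‖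
        ≤ ‖Complex.log w‖ + |Θ (j+1)| := by
          have h : ‖Complex.log w - (Θ (j+1) : ℂ)‖ ≤
              ‖Complex.log w‖ + ‖((Θ (j+1) : ℂ))‖ := by
            simpa using
              norm_sub_le (Complex.log w) ((Θ (j+1) : ℂ))
          rw [Complex.norm_real, Real.norm_eq_abs] at h; exact h
      _ ≤ (|(Complex.log w).re| + |(Complex.log w).im|) + |Θ (j+1)| :=
          add_le_add_left (Complex.norm_le_abs_re_add_abs_im _) _
      _ ≤ |(Complex.log w).re| + (Real.pi + |Θ (j+1)|) := by linarith

private lemma muAux_sub_expand (Θ σ : ℕ → ℝ) (κ l : ℕ) (hl : l < κ) :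
    muAux Θ σ κ (κ - l) = Θ l + σ l * Real.exp (muAux Θ σ κ (κ - l - 1)) := by
  set d := κ - l - 1 with hd
  have h1 : κ - l = d + 1 := by omega
  rw [h1]
  show Θ (κ - (d + 1)) + σ (κ - (d + 1)) * _ = _
  have h2 : κ - (d + 1) = l := by omega
  rw [h2]

private lemma tendsto_zIter_le (Θ σ : ℕ → ℝ) (r κ : ℕ) (hκ : κ ≤ r)
    (hσ : ∀ i, i ≤ r → σ i = 1 ∨ σ i = -1) :
    ∀ l ≤ κ, Tendsto (zIter Θ σ l) (𝓝[HIter Θ σ (r+1)] ((mu Θ σ κ : ℝ) : ℂ))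
      (𝓝 (((muAux Θ σ κ (κ - l) : ℝ) : ℂ) - (Θ l : ℂ))) := by
  intro l
  induction l with
  | zero =>
    intro _
    have h0 : (fun z : ℂ => zIter Θ σ 0 z) = fun z => z - (Θ 0 : ℂ) := rfl
    rw [Nat.sub_zero]
    have : Tendsto (fun z : ℂ => z) (𝓝[HIter Θ σ (r+1)] ((mu Θ σ κ : ℝ) : ℂ))
        (𝓝 ((mu Θ σ κ : ℝ) : ℂ)) := tendsto_id.mono_left nhdsWithin_le_nhds
    simpa [h0, mu] using this.sub_const ((Θ 0 : ℝ) : ℂ)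
  | succ l ih =>
    intro hl1
    have hl : l < κ := hl1
    have hIH := ih (le_of_lt hl)
    set m : ℝ := muAux Θ σ κ (κ - l - 1) with hm
    have hval : ((muAux Θ σ κ (κ - l) : ℝ) : ℂ) - (Θ l : ℂ)
        = (σ l : ℂ) * ((Real.exp m : ℝ) : ℂ) := by
      rw [muAux_sub_expand Θ σ κ l hl]; push_cast; ring
    have hmul : Tendsto (fun z => (σ l : ℂ) * zIter Θ σ l z)
        (𝓝[HIter Θ σ (r+1)] ((mu Θ σ κ : ℝ) : ℂ)) (𝓝 ((Real.exp m : ℝ) : ℂ)) := by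
      have h := (tendsto_const_nhds (x := (σ l : ℂ))).mul hIH
      rw [hval] at h
      have hσ2 : (σ l : ℂ) * ((σ l : ℂ) * ((Real.exp m : ℝ) : ℂ)) = ((Real.exp m : ℝ) : ℂ) := by
        rcases hσ l (by omega) with h1 | h1 <;> rw [h1] <;> push_cast <;> ring
      rwa [hσ2] at h
    have hmem : ((Real.exp m : ℝ) : ℂ) ∈ Complex.slitPlane :=
      Complex.ofReal_mem_slitPlane.2 (Real.exp_pos m)
    have hlog := hmul.clog hmem
    have hlogval : Complex.log ((Real.exp m : ℝ) : ℂ) = (m : ℂ) := by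
      rw [← Complex.ofReal_log (Real.exp_pos m).le, Real.log_exp]
    rw [hlogval] at hlog
    have hfin := hlog.sub_const ((Θ (l+1) : ℝ) : ℂ)
    have hgoal : ((muAux Θ σ κ (κ - (l+1)) : ℝ) : ℂ) - (Θ (l+1) : ℂ)
        = (m : ℂ) - (Θ (l+1) : ℂ) := by
      have : κ - (l+1) = κ - l - 1 := by omega
      rw [this]
    rw [hgoal]
    exact hfin

private noncomputable def aF (Θ σ : ℕ → ℝ) (j : ℕ) (z : ℂ) : ℝ :=
  ‖(σ j : ℂ) * zIter Θ σ j z‖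

private noncomputable def PF (Θ σ : ℕ → ℝ) (κ j : ℕ) (z : ℂ) : ℝ :=
  if j = κ then -Real.log (aF Θ σ κ z) else Real.log (aF Θ σ j z)

private lemma key_chain (Θ σ : ℕ → ℝ) (r κ : ℕ)
    (hσ : ∀ i, i ≤ r → σ i = 1 ∨ σ i = -1)
    {F : Filter ℂ} (hT : Tendsto (PF Θ σ κ κ) F atTop) :
    ∀ j, κ ≤ j → j ≤ r → Tendsto (PF Θ σ κ j) F atTop ∧
      ∀ i, κ ≤ i → i < j → Tendsto (fun z => PF Θ σ κ j z / PF Θ σ κ i z) F (𝓝 0) := by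
  intro j hj
  induction j, hj using Nat.le_induction with
  | base => exact fun _ => ⟨hT, fun i hi hik => absurd (lt_of_le_of_lt hi hik) (lt_irrefl κ)⟩
  | succ j hj IH =>
    intro hjr
    have hjr' : j ≤ r := by omega
    obtain ⟨hPj, hratio⟩ := IH hjr'
    have habs : ∀ z, aF Θ σ (j+1) z = ‖zIter Θ σ (j+1) z‖ := by
      intro z
      show ‖_‖ = _
      rw [norm_mul, Complex.norm_real, Real.norm_eq_abs]
      rcases hσ (j+1) (by omega) with h | h <;> rw [h] <;> norm_num
    have hPabs : ∀ z, 1 ≤ PF Θ σ κ j z → |Real.log (aF Θ σ j z)| = PF Θ σ κ j z := by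
      intro z h
      by_cases hc : j = κ
      · subst hc
        simp only [PF, eq_self_iff_true, if_true] at h ⊢
        rw [abs_of_nonpos (by linarith)]
      · simp only [PF, if_neg hc] at h ⊢
        rw [abs_of_nonneg (by linarith)]
    set C : ℝ := Real.pi + |Θ (j+1)| with hC
    have h1 : ∀ᶠ z in F, PF Θ σ κ j z - C ≤ aF Θ σ (j+1) z := by
      filter_upwards [hPj.eventually_ge_atTop 1] with z hz
      have hb := (abs_zIter_succ_bounds Θ σ j z).1
      rw [habs z, ← hPabs z hz]
      have hπ := Real.pi_pos
      simp only [aF]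
      linarith [abs_nonneg (Θ (j+1))]
    have h2 : ∀ᶠ z in F, aF Θ σ (j+1) z ≤ PF Θ σ κ j z + C := by
      filter_upwards [hPj.eventually_ge_atTop 1] with z hz
      have hb := (abs_zIter_succ_bounds Θ σ j z).2
      rw [habs z, ← hPabs z hz]
      simp only [aF]
      linarith
    obtain ⟨hg, hr⟩ := core_chain hPj h1 h2
    have hne : j + 1 ≠ κ := by omega
    have hP1 : PF Θ σ κ (j+1) = fun z => Real.log (aF Θ σ (j+1) z) := by
      funext z; simp [PF, hne]
    constructor
    · rw [hP1]; exact Real.tendsto_log_atTop.comp hg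
    · intro i hi hij
      rcases Nat.lt_succ_iff_lt_or_eq.mp hij with h | h
      · have hPine : ∀ᶠ z in F, PF Θ σ κ j z ≠ 0 :=
          (hPj.eventually_ge_atTop 1).mono fun z hz => by linarith
        have hr' : Tendsto (fun z => PF Θ σ κ (j+1) z / PF Θ σ κ j z) F (𝓝 0) := by
          simpa only [hP1] using hr
        have hmul := hr'.mul (hratio i hi h)
        rw [mul_zero] at hmul
        refine hmul.congr' ?_
        filter_upwards [hPine] with z hz
        rw [div_mul_div_cancel₀ hz]
      · subst h
        simpa only [hP1] using hr

/-- **Proposition 5.34** (for a fixed value of the parameter `t`, with the definable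
curve replaced by the limit `z → μ_κ` within `H`): let `κ = r`, or assume `k^{ch} ≥ 0`
and let `κ ∈ {k^{ch}, r}`. Then:
(1) for every `l < κ`, `z_l z` tends to the nonzero value `σ l * exp (μ_{κ-l-1,κ})`
as `z → μ_κ` within `H`;
(2) for every `q ∈ ℚ^{r+1}` with `(q κ, …, q r) ≠ 0`: if `q` is `κ`-positive then
`|(σ𝒵)^{⊗q} z| → 0`, and if `q` is `κ`-negative then `|(σ𝒵)^{⊗q} z| → +∞`,
as `z → μ_κ` within `H`. -/
theorem tendsto_zIter_and_sigmaZpow_at_mu (r : ℕ) (Θ σ : ℕ → ℝ)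
    (hσ : ∀ i, i ≤ r → σ i = 1 ∨ σ i = -1)
    (κ : ℕ) (hκcase : κ = r ∨ (0 ≤ kch σ r ∧ (κ : ℤ) = kch σ r)) :
    (∀ l < κ,
      (σ l : ℂ) * (Real.exp (muAux Θ σ κ (κ - l - 1)) : ℂ) ≠ 0 ∧
      Filter.Tendsto (zIter Θ σ l)
        (nhdsWithin ((mu Θ σ κ : ℝ) : ℂ) (HIter Θ σ (r + 1)))
        (nhds ((σ l : ℂ) * (Real.exp (muAux Θ σ κ (κ - l - 1)) : ℂ)))) ∧
    (∀ q : ℕ → ℚ, (∃ j, κ ≤ j ∧ j ≤ r ∧ q j ≠ 0) →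
      (kappaPos q κ r →
        Filter.Tendsto (fun z => ‖sigmaZpow Θ σ r q z‖)
          (nhdsWithin ((mu Θ σ κ : ℝ) : ℂ) (HIter Θ σ (r + 1))) (nhds 0)) ∧
      (kappaNeg q κ r →
        Filter.Tendsto (fun z => ‖sigmaZpow Θ σ r q z‖)
          (nhdsWithin ((mu Θ σ κ : ℝ) : ℂ) (HIter Θ σ (r + 1))) Filter.atTop)) := by
  -- κ ≤ r
  have hκr : κ ≤ r := by
    rcases hκcase with h | ⟨h0, hk⟩
    · omega
    · by_cases hex : ∃ l, l ≤ r ∧ σ l = -1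
      · rw [kch, if_pos hex] at hk
        have hbdd : BddAbove {l : ℕ | l ≤ r ∧ σ l = -1} := ⟨r, fun l hl => hl.1⟩
        obtain ⟨l₀, hl₀⟩ := hex
        have hmem := Nat.sSup_mem ⟨l₀, hl₀⟩ hbdd
        have : sSup {l : ℕ | l ≤ r ∧ σ l = -1} ≤ r := hmem.1
        omega
      · rw [kch, if_neg hex] at hk; omega
  set F := nhdsWithin ((mu Θ σ κ : ℝ) : ℂ) (HIter Θ σ (r + 1)) with hF
  have hH : ∀ᶠ z in F, z ∈ HIter Θ σ (r + 1) := eventually_mem_nhdsWithin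
  have hlim := tendsto_zIter_le Θ σ r κ hκr hσ
  constructor
  · intro l hl
    have hne : (σ l : ℂ) * (Real.exp (muAux Θ σ κ (κ - l - 1)) : ℂ) ≠ 0 := by
      apply mul_ne_zero
      · rcases hσ l (by omega) with h | h <;> rw [h] <;> norm_num
      · simpa using (Real.exp_pos _).ne'
    refine ⟨hne, ?_⟩
    have h := hlim l (le_of_lt hl)
    have hval : ((muAux Θ σ κ (κ - l) : ℝ) : ℂ) - (Θ l : ℂ)
        = (σ l : ℂ) * ((Real.exp (muAux Θ σ κ (κ - l - 1)) : ℝ) : ℂ) := by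
      rw [muAux_sub_expand Θ σ κ l hl]; push_cast; ring
    rwa [hval] at h
  · intro q hq
    -- z_κ tends to 0
    have hzκ : Tendsto (zIter Θ σ κ) F (𝓝 0) := by
      have h := hlim κ le_rfl
      have h0 : ((muAux Θ σ κ (κ - κ) : ℝ) : ℂ) - (Θ κ : ℂ) = 0 := by
        rw [Nat.sub_self]
        show ((Θ κ : ℝ) : ℂ) - (Θ κ : ℂ) = 0
        ring
      rwa [h0] at h
    have haκ : Tendsto (aF Θ σ κ) F (𝓝 0) := by
      have h := (tendsto_const_nhds (x := (σ κ : ℂ))).mul hzκ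
      rw [mul_zero] at h
      have h2 := (continuous_norm.tendsto 0).comp h
      rw [norm_zero] at h2; exact h2
    have haκpos : ∀ᶠ z in F, 0 < aF Θ σ κ z := by
      filter_upwards [hH] with z hz
      have hm := mem_slitPlane_of_mem_HIter Θ σ (r+1) z hz κ (by omega)
      simp only [aF]
      exact norm_pos_iff.mpr (Complex.slitPlane_ne_zero hm)
    have hT : Tendsto (PF Θ σ κ κ) F atTop := by
      have h0 : Tendsto (aF Θ σ κ) F (𝓝[>] (0:ℝ)) :=
        tendsto_nhdsWithin_iff.2 ⟨haκ, haκpos⟩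
      have h1 := Real.tendsto_log_nhdsGT_zero.comp h0
      have h2 := tendsto_neg_atBot_atTop.comp h1
      have hPφ : PF Θ σ κ κ = fun z => -Real.log (aF Θ σ κ z) := by
        funext z; simp [PF]
      rw [hPφ]
      exact h2
    have key := key_chain Θ σ r κ hσ hT
    -- limits of log (aF j) for j < κ
    have hBlt : ∀ j, j < κ → Tendsto (fun z => Real.log (aF Θ σ j z)) F
        (𝓝 (muAux Θ σ κ (κ - j - 1))) := by
      intro j hj
      set m : ℝ := muAux Θ σ κ (κ - j - 1) with hm
      have h := hlim j (le_of_lt hj)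
      have hval : ((muAux Θ σ κ (κ - j) : ℝ) : ℂ) - (Θ j : ℂ)
          = (σ j : ℂ) * ((Real.exp m : ℝ) : ℂ) := by
        rw [muAux_sub_expand Θ σ κ j hj]; push_cast; ring
      rw [hval] at h
      have hmul := (tendsto_const_nhds (x := (σ j : ℂ))).mul h
      have hσ2 : (σ j : ℂ) * ((σ j : ℂ) * ((Real.exp m : ℝ) : ℂ)) = ((Real.exp m : ℝ) : ℂ) := by
        rcases hσ j (by omega) with h1 | h1 <;> rw [h1] <;> push_cast <;> ring
      rw [hσ2] at hmul
      have habs := (continuous_norm.tendsto _).comp hmul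
      have habsval : ‖((Real.exp m : ℝ) : ℂ)‖ = Real.exp m := by
        rw [Complex.norm_real, Real.norm_eq_abs, abs_of_pos (Real.exp_pos m)]
      rw [habsval] at habs
      have hlog := ((Real.continuousAt_log (Real.exp_pos m).ne').tendsto).comp habs
      rw [Real.log_exp] at hlog
      exact hlog
    -- the unified leading-term limit
    have sumlim : ∀ t, κ ≤ t → t ≤ r → (∀ j, κ ≤ j → j < t → q j = 0) →
        Tendsto (fun z => (∑ j ∈ Finset.range (r+1),
            (q j : ℝ) * Real.log (aF Θ σ j z)) / PF Θ σ κ t z) F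
          (𝓝 (if t = κ then -(q t : ℝ) else (q t : ℝ))) := by
      intro t htκ htr hzero
      have hGt : Tendsto (PF Θ σ κ t) F atTop := (key t htκ htr).1
      have hGne : ∀ᶠ z in F, PF Θ σ κ t z ≠ 0 :=
        (hGt.eventually_ge_atTop 1).mono fun z hz => by linarith
      have hterm : ∀ j ∈ Finset.range (r+1),
          Tendsto (fun z => (q j : ℝ) * Real.log (aF Θ σ j z) / PF Θ σ κ t z) F
            (𝓝 (if j = t then (if t = κ then -(q t : ℝ) else (q t : ℝ)) else 0)) := by
        intro j hjr
        rw [Finset.mem_range] at hjr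
        by_cases hjt : j = t
        · subst hjt
          rw [if_pos rfl]
          by_cases hjκ : j = κ
          · subst hjκ
            rw [if_pos rfl]
            refine Tendsto.congr' ?_ (tendsto_const_nhds (x := -(q j : ℝ)))
            filter_upwards [hGne] with z hz
            have hlg : Real.log (aF Θ σ j z) = -PF Θ σ j j z := by
              simp [PF]
            rw [hlg, mul_neg, neg_div, mul_div_assoc, div_self hz, mul_one]
          · rw [if_neg hjκ]
            refine Tendsto.congr' ?_ (tendsto_const_nhds (x := (q j : ℝ)))
            filter_upwards [hGne] with z hz
            have hlg : Real.log (aF Θ σ j z) = PF Θ σ κ j z := by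
              simp [PF, hjκ]
            rw [hlg, mul_div_assoc, div_self hz, mul_one]
        · rw [if_neg hjt]
          rcases lt_or_gt_of_ne hjt with hlt | hgt
          · rcases lt_or_ge j κ with hjκ | hjκ
            · have hB := hBlt j hjκ
              have hnum : Tendsto (fun z => (q j : ℝ) * Real.log (aF Θ σ j z)) F
                  (𝓝 ((q j : ℝ) * muAux Θ σ κ (κ - j - 1))) := tendsto_const_nhds.mul hB
              exact hnum.div_atTop hGt
            · have hq0 : q j = 0 := hzero j hjκ hlt
              have : (fun z => (q j : ℝ) * Real.log (aF Θ σ j z) / PF Θ σ κ t z)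
                  = fun _ => 0 := by
                funext z; rw [hq0]; simp
              rw [this]
              exact tendsto_const_nhds
          · have hjκ' : j ≠ κ := by omega
            have hrat := (key j (by omega) (by omega)).2 t htκ hgt
            have hmul := (tendsto_const_nhds (x := (q j : ℝ))).mul hrat
            rw [mul_zero] at hmul
            refine hmul.congr ?_
            intro z
            have hlg : Real.log (aF Θ σ j z) = PF Θ σ κ j z := by simp [PF, hjκ']
            rw [hlg, mul_div_assoc]
      have hsum := tendsto_finset_sum (Finset.range (r+1)) hterm
      have hsval : (∑ j ∈ Finset.range (r+1),
          (if j = t then (if t = κ then -(q t : ℝ) else (q t : ℝ)) else 0))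
          = (if t = κ then -(q t : ℝ) else (q t : ℝ)) := by
        rw [Finset.sum_ite_eq' (Finset.range (r+1)) t
          (fun _ => (if t = κ then -(q t : ℝ) else (q t : ℝ)))]
        simp [Finset.mem_range, Nat.lt_succ_of_le htr]
      rw [hsval] at hsum
      refine hsum.congr ?_
      intro z
      rw [Finset.sum_div]
    -- choose the leading index and its limit value
    obtain ⟨G, c, hG, hratioS, hposc, hnegc⟩ :
        ∃ (G : ℂ → ℝ) (c : ℝ), Tendsto G F atTop ∧
          Tendsto (fun z => (∑ j ∈ Finset.range (r+1),
              (q j : ℝ) * Real.log (aF Θ σ j z)) / G z) F (𝓝 c) ∧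
          (kappaPos q κ r → c < 0) ∧ (kappaNeg q κ r → 0 < c) := by
      by_cases hqκ : q κ = 0
      · -- leading index is lmin
        obtain ⟨j₀, hj₀κ, hj₀r, hj₀⟩ := hq
        have hj₀κ' : κ < j₀ := by
          rcases eq_or_lt_of_le hj₀κ with h | h
          · exact absurd (h ▸ hqκ) hj₀
          · exact h
        have hsne : {j : ℕ | κ < j ∧ j ≤ r ∧ q j ≠ 0}.Nonempty := ⟨j₀, hj₀κ', hj₀r, hj₀⟩
        have hlmem : lmin q κ r ∈ {j : ℕ | κ < j ∧ j ≤ r ∧ q j ≠ 0} := Nat.sInf_mem hsne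
        obtain ⟨hlκ, hlr, hlq⟩ := hlmem
        have hzero : ∀ j, κ ≤ j → j < lmin q κ r → q j = 0 := by
          intro j hjκ hjl
          rcases eq_or_lt_of_le hjκ with h | h
          · exact h ▸ hqκ
          · by_contra hc
            have hle : lmin q κ r ≤ j :=
              Nat.sInf_le (show j ∈ {j : ℕ | κ < j ∧ j ≤ r ∧ q j ≠ 0} from ⟨h, by omega, hc⟩)
            omega
        have hlne : lmin q κ r ≠ κ := by omega
        refine ⟨PF Θ σ κ (lmin q κ r), (q (lmin q κ r) : ℝ),
          (key (lmin q κ r) (le_of_lt hlκ) hlr).1, ?_, ?_, ?_⟩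
        · have h := sumlim (lmin q κ r) (le_of_lt hlκ) hlr hzero
          rwa [if_neg hlne] at h
        · intro hpos
          rcases hpos with h | ⟨_, h⟩
          · exact absurd hqκ (ne_of_gt h)
          · exact_mod_cast h
        · intro hneg
          rcases hneg with h | ⟨_, h⟩
          · exact absurd hqκ (ne_of_lt h)
          · exact_mod_cast h
      · -- leading index is κ
        refine ⟨PF Θ σ κ κ, -(q κ : ℝ), hT, ?_, ?_, ?_⟩
        · have h := sumlim κ le_rfl hκr (fun j hjκ hjκ' => absurd (lt_of_le_of_lt hjκ hjκ')
            (lt_irrefl κ))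
          rwa [if_pos rfl] at h
        · intro hpos
          rcases hpos with h | ⟨h, _⟩
          · have : (0:ℝ) < (q κ : ℝ) := by exact_mod_cast h
            linarith
          · exact absurd h hqκ
        · intro hneg
          rcases hneg with h | ⟨h, _⟩
          · have : (q κ : ℝ) < 0 := by exact_mod_cast h
            linarith
          · exact absurd h hqκ
    have habsS : (fun z => ‖sigmaZpow Θ σ r q z‖)
        = fun z => Real.exp (∑ j ∈ Finset.range (r+1),
            (q j : ℝ) * Real.log (aF Θ σ j z)) := by
      funext z
      rw [abs_sigmaZpow]
      rfl
    have hSeq : ∀ᶠ z in F, (∑ j ∈ Finset.range (r+1),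
        (q j : ℝ) * Real.log (aF Θ σ j z)) / G z * G z
        = ∑ j ∈ Finset.range (r+1), (q j : ℝ) * Real.log (aF Θ σ j z) := by
      filter_upwards [hG.eventually_ge_atTop 1] with z hz
      exact div_mul_cancel₀ _ (by linarith)
    constructor
    · intro hpos
      have hc : c < 0 := hposc hpos
      have hS : Tendsto (fun z => ∑ j ∈ Finset.range (r+1),
          (q j : ℝ) * Real.log (aF Θ σ j z)) F atBot := by
        have h := hratioS.neg_mul_atTop hc hG
        exact h.congr' hSeq
      have h := Real.tendsto_exp_atBot.comp hS
      rw [habsS]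
      exact h
    · intro hneg
      have hc : 0 < c := hnegc hneg
      have hS : Tendsto (fun z => ∑ j ∈ Finset.range (r+1),
          (q j : ℝ) * Real.log (aF Θ σ j z)) F atTop := by
        have h := hratioS.pos_mul_atTop hc hG
        exact h.congr' hSeq
      have h := Real.tendsto_exp_atTop.comp hS
      rw [habsS]
      exact h
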